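/- No nonzero real linear combination a T₁ + b T₂ of the alternating trilinear forms T₁ and T₂ on so(3,1) is a Chevalley–Eilenberg 3-coboundary: if there exists an alternating bilinear form β : so(3,1)² → ℝ with a T₁ + b T₂ = dβ, then a = b = 0. -/

import Mathlib

open Matrix

attribute [local instance 100] LieRing.ofAssociativeRing

noncomputable section

/-- The Minkowski metric `η = diag(−1,1,1,1)`. -/
def eta : Matrix (Fin 4) (Fin 4) ℝ := Matrix.diagonal ![-1, 1, 1, 1]

/-- The real Lie algebra `so(3,1)`: 4×4 real matrices `A` with `Aᵀη + ηA = 0`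
(skew-adjoint with respect to `η`), with the matrix commutator as bracket. -/
def so31 : LieSubalgebra ℝ (Matrix (Fin 4) (Fin 4) ℝ) :=
  skewAdjointMatricesLieSubalgebra eta

/-- The totally antisymmetric symbol `ε` with `ε^{0123} = 1` (realized as the
determinant of the corresponding rows of the identity matrix). -/
def eps (a b c d : Fin 4) : ℝ :=
  Matrix.det (Matrix.of fun i j => if ![a, b, c, d] i = j then (1 : ℝ) else 0)

/-- The trilinear form `T₁(A,B,C) = tr(A[B,C])` on `so(3,1)`. -/
def T1 (A B C : so31) : ℝ :=
  Matrix.trace ((A : Matrix (Fin 4) (Fin 4) ℝ) *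
    ((B : Matrix (Fin 4) (Fin 4) ℝ) * (C : Matrix (Fin 4) (Fin 4) ℝ) -
     (C : Matrix (Fin 4) (Fin 4) ℝ) * (B : Matrix (Fin 4) (Fin 4) ℝ)))

/-- The trilinear form
`T₂(A,B,C) = Σ_{a,b,c,d,e,f} ε^{abcd} η^{ef} (ηA)_{ab} (ηB)_{ce} (ηC)_{df}`
on `so(3,1)` (here `η^{ef}` are the entries of `η⁻¹ = η`). -/
def T2 (A B C : so31) : ℝ :=
  ∑ a, ∑ b, ∑ c, ∑ d, ∑ e, ∑ f,
    eps a b c d * eta e f * (eta * (A : Matrix (Fin 4) (Fin 4) ℝ)) a b *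
      (eta * (B : Matrix (Fin 4) (Fin 4) ℝ)) c e *
      (eta * (C : Matrix (Fin 4) (Fin 4) ℝ)) d f

/-- The Chevalley–Eilenberg differential (trivial real coefficients) of an
`(m+1)`-cochain:
`(dc)(x₀,…,x_{m+1}) = Σ_{i<j} (−1)^{i+j} c([x_i,x_j], x₀,…,x̂_i,…,x̂_j,…,x_{m+1})`. -/
def ceDiff {g : Type*} [LieRing g] {m : ℕ}
    (c : (Fin (m + 1) → g) → ℝ) : (Fin (m + 2) → g) → ℝ :=
  fun x => ∑ i : Fin (m + 2), ∑ j : Fin (m + 2),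
    if hij : i < j then
      (-1 : ℝ) ^ ((i : ℕ) + (j : ℕ)) *
        c (Fin.cons ⁅x i, x j⁆ fun t : Fin m =>
            x (j.succAbove ((⟨(i : ℕ), by
                have h1 : (i : ℕ) < (j : ℕ) := hij
                have h2 := j.isLt
                omega⟩ : Fin (m + 1)).succAbove t)))
    else 0

/-! ### Auxiliary machinery -/

lemma eta_eq : eta = !![-1,0,0,0; 0,1,0,0; 0,0,1,0; 0,0,0,1] := by
  ext i j; fin_cases i <;> fin_cases j <;> rfl

lemma det_fin_four (M : Matrix (Fin 4) (Fin 4) ℝ) : M.det =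
    M 0 0 * (M 1 1 * (M 2 2 * M 3 3 - M 2 3 * M 3 2)
      - M 1 2 * (M 2 1 * M 3 3 - M 2 3 * M 3 1)
      + M 1 3 * (M 2 1 * M 3 2 - M 2 2 * M 3 1))
  - M 0 1 * (M 1 0 * (M 2 2 * M 3 3 - M 2 3 * M 3 2)
      - M 1 2 * (M 2 0 * M 3 3 - M 2 3 * M 3 0)
      + M 1 3 * (M 2 0 * M 3 2 - M 2 2 * M 3 0))
  + M 0 2 * (M 1 0 * (M 2 1 * M 3 3 - M 2 3 * M 3 1)
      - M 1 1 * (M 2 0 * M 3 3 - M 2 3 * M 3 0)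
      + M 1 3 * (M 2 0 * M 3 1 - M 2 1 * M 3 0))
  - M 0 3 * (M 1 0 * (M 2 1 * M 3 2 - M 2 2 * M 3 1)
      - M 1 1 * (M 2 0 * M 3 2 - M 2 2 * M 3 0)
      + M 1 2 * (M 2 0 * M 3 1 - M 2 1 * M 3 0)) := by
  rw [Matrix.det_succ_row_zero]
  simp (config := { decide := true }) [Fin.sum_univ_four, Matrix.det_fin_three,
    Matrix.submatrix_apply, Fin.succAbove, show (Fin.succ 0 : Fin 4) = 1 from rfl,
    show (Fin.castSucc 0 : Fin 4) = 0 from rfl, show (Fin.castSucc 1 : Fin 4) = 1 from rfl,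
    show (Fin.castSucc 2 : Fin 4) = 2 from rfl,
    show (Fin.succ 1 : Fin 4) = 2 from rfl, show (Fin.succ 2 : Fin 4) = 3 from rfl]
  ring

lemma mem_so31 {M : Matrix (Fin 4) (Fin 4) ℝ} (h : Mᵀ * eta = eta * (-M)) : M ∈ so31 := by
  have : M ∈ skewAdjointMatricesSubmodule eta := by
    rw [mem_skewAdjointMatricesSubmodule]
    exact h
  exact this
-- matrices
def mJ1 : Matrix (Fin 4) (Fin 4) ℝ := !![0,0,0,0; 0,0,0,0; 0,0,0,-1; 0,0,1,0]
def mJ2 : Matrix (Fin 4) (Fin 4) ℝ := !![0,0,0,0; 0,0,0,1; 0,0,0,0; 0,-1,0,0]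
def mJ3 : Matrix (Fin 4) (Fin 4) ℝ := !![0,0,0,0; 0,0,-1,0; 0,1,0,0; 0,0,0,0]
def mK1 : Matrix (Fin 4) (Fin 4) ℝ := !![0,1,0,0; 1,0,0,0; 0,0,0,0; 0,0,0,0]
def mK2 : Matrix (Fin 4) (Fin 4) ℝ := !![0,0,1,0; 0,0,0,0; 1,0,0,0; 0,0,0,0]
def mK3 : Matrix (Fin 4) (Fin 4) ℝ := !![0,0,0,1; 0,0,0,0; 0,0,0,0; 1,0,0,0]
lemma mJ1_mem : mJ1 ∈ so31 := mem_so31 (by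
  ext i j; fin_cases i <;> fin_cases j <;>
    simp [eta_eq, mJ1, Matrix.mul_apply, Fin.sum_univ_four, Matrix.vecHead, Matrix.vecTail])
lemma mJ2_mem : mJ2 ∈ so31 := mem_so31 (by
  ext i j; fin_cases i <;> fin_cases j <;>
    simp [eta_eq, mJ2, Matrix.mul_apply, Fin.sum_univ_four, Matrix.vecHead, Matrix.vecTail])
lemma mJ3_mem : mJ3 ∈ so31 := mem_so31 (by
  ext i j; fin_cases i <;> fin_cases j <;>
    simp [eta_eq, mJ3, Matrix.mul_apply, Fin.sum_univ_four, Matrix.vecHead, Matrix.vecTail])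
lemma mK1_mem : mK1 ∈ so31 := mem_so31 (by
  ext i j; fin_cases i <;> fin_cases j <;>
    simp [eta_eq, mK1, Matrix.mul_apply, Fin.sum_univ_four, Matrix.vecHead, Matrix.vecTail])
lemma mK2_mem : mK2 ∈ so31 := mem_so31 (by
  ext i j; fin_cases i <;> fin_cases j <;>
    simp [eta_eq, mK2, Matrix.mul_apply, Fin.sum_univ_four, Matrix.vecHead, Matrix.vecTail])
lemma mK3_mem : mK3 ∈ so31 := mem_so31 (by
  ext i j; fin_cases i <;> fin_cases j <;>
    simp [eta_eq, mK3, Matrix.mul_apply, Fin.sum_univ_four, Matrix.vecHead, Matrix.vecTail])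
def J1 : so31 := ⟨mJ1, mJ1_mem⟩
@[simp] lemma coe_J1 : (J1 : Matrix (Fin 4) (Fin 4) ℝ) = mJ1 := rfl
def J2 : so31 := ⟨mJ2, mJ2_mem⟩
@[simp] lemma coe_J2 : (J2 : Matrix (Fin 4) (Fin 4) ℝ) = mJ2 := rfl
def J3 : so31 := ⟨mJ3, mJ3_mem⟩
@[simp] lemma coe_J3 : (J3 : Matrix (Fin 4) (Fin 4) ℝ) = mJ3 := rfl
def K1 : so31 := ⟨mK1, mK1_mem⟩
@[simp] lemma coe_K1 : (K1 : Matrix (Fin 4) (Fin 4) ℝ) = mK1 := rfl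
def K2 : so31 := ⟨mK2, mK2_mem⟩
@[simp] lemma coe_K2 : (K2 : Matrix (Fin 4) (Fin 4) ℝ) = mK2 := rfl
def K3 : so31 := ⟨mK3, mK3_mem⟩
@[simp] lemma coe_K3 : (K3 : Matrix (Fin 4) (Fin 4) ℝ) = mK3 := rfl
lemma etaJ1 : eta * mJ1 = !![0,0,0,0; 0,0,0,0; 0,0,0,-1; 0,0,1,0] := by
  ext i j; fin_cases i <;> fin_cases j <;>
    simp [eta_eq, mJ1, Matrix.mul_apply, Fin.sum_univ_four, Matrix.vecHead, Matrix.vecTail]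
lemma etaJ2 : eta * mJ2 = !![0,0,0,0; 0,0,0,1; 0,0,0,0; 0,-1,0,0] := by
  ext i j; fin_cases i <;> fin_cases j <;>
    simp [eta_eq, mJ2, Matrix.mul_apply, Fin.sum_univ_four, Matrix.vecHead, Matrix.vecTail]
lemma etaJ3 : eta * mJ3 = !![0,0,0,0; 0,0,-1,0; 0,1,0,0; 0,0,0,0] := by
  ext i j; fin_cases i <;> fin_cases j <;>
    simp [eta_eq, mJ3, Matrix.mul_apply, Fin.sum_univ_four, Matrix.vecHead, Matrix.vecTail]
lemma etaK1 : eta * mK1 = !![0,-1,0,0; 1,0,0,0; 0,0,0,0; 0,0,0,0] := by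
  ext i j; fin_cases i <;> fin_cases j <;>
    simp [eta_eq, mK1, Matrix.mul_apply, Fin.sum_univ_four, Matrix.vecHead, Matrix.vecTail]
lemma etaK2 : eta * mK2 = !![0,0,-1,0; 0,0,0,0; 1,0,0,0; 0,0,0,0] := by
  ext i j; fin_cases i <;> fin_cases j <;>
    simp [eta_eq, mK2, Matrix.mul_apply, Fin.sum_univ_four, Matrix.vecHead, Matrix.vecTail]
lemma etaK3 : eta * mK3 = !![0,0,0,-1; 0,0,0,0; 0,0,0,0; 1,0,0,0] := by
  ext i j; fin_cases i <;> fin_cases j <;>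
    simp [eta_eq, mK3, Matrix.mul_apply, Fin.sum_univ_four, Matrix.vecHead, Matrix.vecTail]
lemma br_J1_J2 : ⁅(J1 : so31), (J2 : so31)⁆ = J3 := by
  apply Subtype.ext
  show mJ1 * mJ2 - mJ2 * mJ1 = _
  ext i j; fin_cases i <;> fin_cases j <;>
    simp [mJ1, mJ2, mJ3, Matrix.mul_apply, Matrix.sub_apply, Fin.sum_univ_four,
      Matrix.vecHead, Matrix.vecTail]
lemma br_J1_J3 : ⁅(J1 : so31), (J3 : so31)⁆ = -J2 := by
  apply Subtype.ext
  show mJ1 * mJ3 - mJ3 * mJ1 = _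
  ext i j; fin_cases i <;> fin_cases j <;>
    simp [mJ1, mJ3, mJ2, Matrix.mul_apply, Matrix.sub_apply, Fin.sum_univ_four,
      Matrix.vecHead, Matrix.vecTail]
lemma br_J2_J3 : ⁅(J2 : so31), (J3 : so31)⁆ = J1 := by
  apply Subtype.ext
  show mJ2 * mJ3 - mJ3 * mJ2 = _
  ext i j; fin_cases i <;> fin_cases j <;>
    simp [mJ2, mJ3, mJ1, Matrix.mul_apply, Matrix.sub_apply, Fin.sum_univ_four,
      Matrix.vecHead, Matrix.vecTail]
lemma br_K1_K2 : ⁅(K1 : so31), (K2 : so31)⁆ = -J3 := by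
  apply Subtype.ext
  show mK1 * mK2 - mK2 * mK1 = _
  ext i j; fin_cases i <;> fin_cases j <;>
    simp [mK1, mK2, mJ3, Matrix.mul_apply, Matrix.sub_apply, Fin.sum_univ_four,
      Matrix.vecHead, Matrix.vecTail]
lemma br_K1_K3 : ⁅(K1 : so31), (K3 : so31)⁆ = J2 := by
  apply Subtype.ext
  show mK1 * mK3 - mK3 * mK1 = _
  ext i j; fin_cases i <;> fin_cases j <;>
    simp [mK1, mK3, mJ2, Matrix.mul_apply, Matrix.sub_apply, Fin.sum_univ_four,
      Matrix.vecHead, Matrix.vecTail]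
lemma br_K2_K3 : ⁅(K2 : so31), (K3 : so31)⁆ = -J1 := by
  apply Subtype.ext
  show mK2 * mK3 - mK3 * mK2 = _
  ext i j; fin_cases i <;> fin_cases j <;>
    simp [mK2, mK3, mJ1, Matrix.mul_apply, Matrix.sub_apply, Fin.sum_univ_four,
      Matrix.vecHead, Matrix.vecTail]
lemma br_J1_K3 : ⁅(J1 : so31), (K3 : so31)⁆ = -K2 := by
  apply Subtype.ext
  show mJ1 * mK3 - mK3 * mJ1 = _
  ext i j; fin_cases i <;> fin_cases j <;>
    simp [mJ1, mK3, mK2, Matrix.mul_apply, Matrix.sub_apply, Fin.sum_univ_four,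
      Matrix.vecHead, Matrix.vecTail]
lemma br_J2_K3 : ⁅(J2 : so31), (K3 : so31)⁆ = K1 := by
  apply Subtype.ext
  show mJ2 * mK3 - mK3 * mJ2 = _
  ext i j; fin_cases i <;> fin_cases j <;>
    simp [mJ2, mK3, mK1, Matrix.mul_apply, Matrix.sub_apply, Fin.sum_univ_four,
      Matrix.vecHead, Matrix.vecTail]
lemma br_J2_K1 : ⁅(J2 : so31), (K1 : so31)⁆ = -K3 := by
  apply Subtype.ext
  show mJ2 * mK1 - mK1 * mJ2 = _
  ext i j; fin_cases i <;> fin_cases j <;>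
    simp [mJ2, mK1, mK3, Matrix.mul_apply, Matrix.sub_apply, Fin.sum_univ_four,
      Matrix.vecHead, Matrix.vecTail]
lemma br_J3_K1 : ⁅(J3 : so31), (K1 : so31)⁆ = K2 := by
  apply Subtype.ext
  show mJ3 * mK1 - mK1 * mJ3 = _
  ext i j; fin_cases i <;> fin_cases j <;>
    simp [mJ3, mK1, mK2, Matrix.mul_apply, Matrix.sub_apply, Fin.sum_univ_four,
      Matrix.vecHead, Matrix.vecTail]
lemma br_J3_J1 : ⁅(J3 : so31), (J1 : so31)⁆ = J2 := by
  apply Subtype.ext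
  show mJ3 * mJ1 - mJ1 * mJ3 = _
  ext i j; fin_cases i <;> fin_cases j <;>
    simp [mJ3, mJ1, mJ2, Matrix.mul_apply, Matrix.sub_apply, Fin.sum_univ_four,
      Matrix.vecHead, Matrix.vecTail]
lemma br_J3_K2 : ⁅(J3 : so31), (K2 : so31)⁆ = -K1 := by
  apply Subtype.ext
  show mJ3 * mK2 - mK2 * mJ3 = _
  ext i j; fin_cases i <;> fin_cases j <;>
    simp [mJ3, mK2, mK1, Matrix.mul_apply, Matrix.sub_apply, Fin.sum_univ_four,
      Matrix.vecHead, Matrix.vecTail]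
lemma br_J1_K2 : ⁅(J1 : so31), (K2 : so31)⁆ = K3 := by
  apply Subtype.ext
  show mJ1 * mK2 - mK2 * mJ1 = _
  ext i j; fin_cases i <;> fin_cases j <;>
    simp [mJ1, mK2, mK3, Matrix.mul_apply, Matrix.sub_apply, Fin.sum_univ_four,
      Matrix.vecHead, Matrix.vecTail]

/-! ### Rearrangement of T2 -/

lemma T2_eq (A B C : so31) : T2 A B C =
    ∑ a, ∑ b, ∑ c, ∑ d, eps a b c d * (eta * (A : Matrix (Fin 4) (Fin 4) ℝ)) a b *
      (∑ e, ∑ f, eta e f * (eta * (B : Matrix (Fin 4) (Fin 4) ℝ)) c e *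
        (eta * (C : Matrix (Fin 4) (Fin 4) ℝ)) d f) := by
  unfold T2
  refine Finset.sum_congr rfl fun a _ => Finset.sum_congr rfl fun b _ =>
    Finset.sum_congr rfl fun c _ => Finset.sum_congr rfl fun d _ => ?_
  rw [Finset.mul_sum]
  refine Finset.sum_congr rfl fun e _ => ?_
  rw [Finset.mul_sum]
  refine Finset.sum_congr rfl fun f _ => by ring

/-! ### Inner double sums -/

lemma Q_J2_J3 (c d : Fin 4) : (∑ e, ∑ f, eta e f * (eta * mJ2) c e * (eta * mJ3) d f) =
    (!![0,0,0,0; 0,0,0,0; 0,0,0,0; 0,0,-1,0] : Matrix (Fin 4) (Fin 4) ℝ) c d := by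
  simp only [etaJ2, etaJ3]
  fin_cases c <;> fin_cases d <;>
    simp (config := { decide := true }) [eta_eq, mJ2, mJ3, Fin.sum_univ_four,
      Matrix.vecHead, Matrix.vecTail]

lemma Q_K2_K3 (c d : Fin 4) : (∑ e, ∑ f, eta e f * (eta * mK2) c e * (eta * mK3) d f) =
    (!![0,0,0,0; 0,0,0,0; 0,0,0,-1; 0,0,0,0] : Matrix (Fin 4) (Fin 4) ℝ) c d := by
  simp only [etaK2, etaK3]
  fin_cases c <;> fin_cases d <;>
    simp (config := { decide := true }) [eta_eq, mK2, mK3, Fin.sum_univ_four,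
      Matrix.vecHead, Matrix.vecTail]

lemma Q_J2_K3 (c d : Fin 4) : (∑ e, ∑ f, eta e f * (eta * mJ2) c e * (eta * mK3) d f) =
    (!![0,0,0,0; -1,0,0,0; 0,0,0,0; 0,0,0,0] : Matrix (Fin 4) (Fin 4) ℝ) c d := by
  simp only [etaJ2, etaK3]
  fin_cases c <;> fin_cases d <;>
    simp (config := { decide := true }) [eta_eq, mJ2, mK3, Fin.sum_univ_four,
      Matrix.vecHead, Matrix.vecTail]

lemma Q_J3_K1 (c d : Fin 4) : (∑ e, ∑ f, eta e f * (eta * mJ3) c e * (eta * mK1) d f) =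
    (!![0,0,0,0; 0,0,0,0; -1,0,0,0; 0,0,0,0] : Matrix (Fin 4) (Fin 4) ℝ) c d := by
  simp only [etaJ3, etaK1]
  fin_cases c <;> fin_cases d <;>
    simp (config := { decide := true }) [eta_eq, mJ3, mK1, Fin.sum_univ_four,
      Matrix.vecHead, Matrix.vecTail]

lemma Q_J1_K2 (c d : Fin 4) : (∑ e, ∑ f, eta e f * (eta * mJ1) c e * (eta * mK2) d f) =
    (!![0,0,0,0; 0,0,0,0; 0,0,0,0; -1,0,0,0] : Matrix (Fin 4) (Fin 4) ℝ) c d := by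
  simp only [etaJ1, etaK2]
  fin_cases c <;> fin_cases d <;>
    simp (config := { decide := true }) [eta_eq, mJ1, mK2, Fin.sum_univ_four,
      Matrix.vecHead, Matrix.vecTail]

/-! ### T2 values -/

set_option maxHeartbeats 2000000 in
lemma T2_JJJ : T2 J1 J2 J3 = 0 := by
  rw [T2_eq]
  simp only [coe_J1, coe_J2, coe_J3, Q_J2_J3, etaJ1]
  norm_num [Fin.sum_univ_four, mJ1, mJ2, mJ3, mK1, mK2, mK3, Matrix.vecHead, Matrix.vecTail]
  simp (config := { decide := true }) [eps, det_fin_four]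

set_option maxHeartbeats 2000000 in
lemma T2_KKK : T2 K1 K2 K3 = 2 := by
  rw [T2_eq]
  simp only [coe_K1, coe_K2, coe_K3, Q_K2_K3, etaK1]
  norm_num [Fin.sum_univ_four, mJ1, mJ2, mJ3, mK1, mK2, mK3, Matrix.vecHead, Matrix.vecTail]
  simp (config := { decide := true }) [eps, det_fin_four]
  norm_num

set_option maxHeartbeats 2000000 in
lemma T2_JJK : T2 J1 J2 K3 = -2 := by
  rw [T2_eq]
  simp only [coe_J1, coe_J2, coe_K3, Q_J2_K3, etaJ1]
  norm_num [Fin.sum_univ_four, mJ1, mJ2, mJ3, mK1, mK2, mK3, Matrix.vecHead, Matrix.vecTail]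
  simp (config := { decide := true }) [eps, det_fin_four]
  norm_num

set_option maxHeartbeats 2000000 in
lemma T2_JJK2 : T2 J2 J3 K1 = -2 := by
  rw [T2_eq]
  simp only [coe_J2, coe_J3, coe_K1, Q_J3_K1, etaJ2]
  norm_num [Fin.sum_univ_four, mJ1, mJ2, mJ3, mK1, mK2, mK3, Matrix.vecHead, Matrix.vecTail]
  simp (config := { decide := true }) [eps, det_fin_four]
  norm_num

set_option maxHeartbeats 2000000 in
lemma T2_JJK3 : T2 J3 J1 K2 = -2 := by
  rw [T2_eq]
  simp only [coe_J3, coe_J1, coe_K2, Q_J1_K2, etaJ3]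
  norm_num [Fin.sum_univ_four, mJ1, mJ2, mJ3, mK1, mK2, mK3, Matrix.vecHead, Matrix.vecTail]
  simp (config := { decide := true }) [eps, det_fin_four]
  norm_num

/-! ### T1 value -/

lemma T1_JJJ : T1 J1 J2 J3 = -2 := by
  simp [T1, Matrix.trace, Matrix.diag, Matrix.mul_apply, Matrix.sub_apply,
    Fin.sum_univ_four, mJ1, mJ2, mJ3, Matrix.vecHead, Matrix.vecTail]
  norm_num

/-! ### ceDiff on triples -/

lemma ceDiff_three (β : AlternatingMap ℝ so31 ℝ (Fin 2)) (x : Fin 3 → so31) :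
    ceDiff (⇑β) x = -β ![⁅x 0, x 1⁆, x 2] + β ![⁅x 0, x 2⁆, x 1] - β ![⁅x 1, x 2⁆, x 0] := by
  have key : ∀ (z : so31) (f : Fin 1 → so31), β (Fin.cons z f) = β ![z, f 0] := by
    intro z f
    congr 1
    funext t
    fin_cases t <;> rfl
  have exp3 : ∀ F : Fin (1 + 2) → ℝ, (∑ i, F i) = F 0 + F 1 + F 2 := fun F =>
    Fin.sum_univ_three F
  rw [show ceDiff (⇑β) x = ∑ i : Fin (1+2), ∑ j : Fin (1+2),
      (if hij : i < j then
        (-1 : ℝ) ^ ((i : ℕ) + (j : ℕ)) *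
          β (Fin.cons ⁅x i, x j⁆ fun t : Fin 1 =>
              x (j.succAbove ((⟨(i : ℕ), by
                  have h1 : (i : ℕ) < (j : ℕ) := hij
                  have h2 := j.isLt
                  omega⟩ : Fin (1 + 1)).succAbove t)))
      else 0) from rfl]
  rw [exp3, exp3, exp3, exp3]
  norm_num [key]
  norm_num [Fin.succAbove, show ((0:Fin (1+2)) < 1) from by decide,
    show ((0:Fin (1+2)) < 2) from by decide, show ((1:Fin (1+2)) < 2) from by decide]
  rw [if_neg (by decide)]
  ring

/-! ### Alternating form helpers -/

lemma beta_same (β : AlternatingMap ℝ so31 ℝ (Fin 2)) (z : so31) : β ![z, z] = 0 :=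
  β.map_eq_zero_of_eq _ (show ![z,z] 0 = ![z,z] 1 from rfl) (by decide)

lemma beta_neg (β : AlternatingMap ℝ so31 ℝ (Fin 2)) (y z : so31) :
    β ![-y, z] = -β ![y, z] := by
  have h1 : ![-y, z] = Function.update ![y, z] 0 (-y) := by
    funext t; fin_cases t <;> simp
  have h2 : ![y, z] = Function.update ![y, z] 0 y := by
    funext t; fin_cases t <;> simp
  rw [h1, AlternatingMap.map_update_neg]
  congr 1
  rw [← h2]

lemma beta_swap (β : AlternatingMap ℝ so31 ℝ (Fin 2)) (y z : so31) :
    β ![y, z] = -β ![z, y] := by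
  have h1 : ![y, z] = ![z, y] ∘ Equiv.swap 0 1 := by
    funext t; fin_cases t <;> simp [Equiv.swap_apply_of_ne_of_ne]
  rw [h1, β.map_swap _ (by decide)]

/-! ### Main theorem -/

/-- no nonzero real linear combination `a T₁ + b T₂` is a
Chevalley–Eilenberg 3-coboundary: if there is an alternating bilinear form
`β : so(3,1)² → ℝ` with `a T₁ + b T₂ = dβ`, then `a = b = 0`. -/
theorem no_combination_is_coboundary (a b : ℝ)
    (β : AlternatingMap ℝ so31 ℝ (Fin 2))
    (h : ∀ x : Fin 3 → so31,
      a * T1 (x 0) (x 1) (x 2) + b * T2 (x 0) (x 1) (x 2) = ceDiff (⇑β) x) :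
    a = 0 ∧ b = 0 := by
  have hJ := h ![J1, J2, J3]
  rw [ceDiff_three] at hJ
  simp only [Matrix.cons_val_zero, Matrix.cons_val_one, Matrix.head_cons,
    Matrix.cons_val_two, Matrix.tail_cons] at hJ
  rw [br_J1_J2, br_J1_J3, br_J2_J3] at hJ
  rw [beta_neg, beta_same, beta_same, beta_same] at hJ
  rw [T1_JJJ, T2_JJJ] at hJ
  have ha : a = 0 := by linarith
  subst ha
  simp only [zero_mul, zero_add] at h
  have hm1 := h ![J1, J2, K3]
  have hm2 := h ![J2, J3, K1]
  have hm3 := h ![J3, J1, K2]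
  have hK := h ![K1, K2, K3]
  rw [ceDiff_three] at hm1 hm2 hm3 hK
  simp only [Matrix.cons_val_zero, Matrix.cons_val_one, Matrix.head_cons,
    Matrix.cons_val_two, Matrix.tail_cons] at hm1 hm2 hm3 hK
  rw [br_J1_J2, br_J1_K3, br_J2_K3, T2_JJK] at hm1
  rw [br_J2_J3, br_J2_K1, br_J3_K1, T2_JJK2] at hm2
  rw [br_J3_J1, br_J3_K2, br_J1_K2, T2_JJK3] at hm3
  rw [br_K1_K2, br_K1_K3, br_K2_K3, T2_KKK] at hK
  rw [beta_neg β K2 J2] at hm1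
  rw [beta_neg β K3 J3] at hm2
  rw [beta_neg β K1 J1] at hm3
  rw [beta_neg β J3 K3, beta_neg β J1 K1] at hK
  rw [beta_swap β K2 J2] at hm1
  rw [beta_swap β K3 J3] at hm2
  rw [beta_swap β K1 J1] at hm3
  rw [beta_swap β K1 J1] at hm1
  rw [beta_swap β K2 J2] at hm2
  rw [beta_swap β K3 J3] at hm3
  refine ⟨rfl, by linarith⟩
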